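/- Let α ≥ 1 and 0 < p < 2. For measurable F on the upper half-space ℝ^{n+1}_+, define S_α(F)(x) = (∫_{Γ_α(x)} |F(y,t)|² dy dt / t^{n+1})^{1/2} where Γ_α(x) = {(y,t) : |x−y| < αt}. Then there is a constant c_p (depending only on n and p) such that ‖S_α(F)‖_{L^{p,∞}} ≤ c_p α^{n/p} ‖S_1(F)‖_{L^{p,∞}}, assuming the change-of-aperture inequality ∫_{ℝⁿ∖U_λ} S_α(F)² dx ≤ 2αⁿ ∫_{ℝⁿ∖Ω_λ} S_1(F)² dx, where Ω_λ = {S_1(F) > λ} and U_λ = {M χ_{Ω_λ} > 1/(2α)ⁿ} with M the Hardy–Littlewood maximal operator. -/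

import Mathlib

open MeasureTheory Metric Set
open scoped ENNReal NNReal

/-- The square function `S_α(F)(x) = (∫_{Γ_α(x)} |F(y,t)|² dy dt/t^{n+1})^{1/2}`
over the cone `Γ_α(x) = {(y,t) : |x-y| < α t}` in the upper half space. -/
noncomputable def coneSquare (n : ℕ) (F : EuclideanSpace ℝ (Fin n) → ℝ → ℝ)
    (a : ℝ) (x : EuclideanSpace ℝ (Fin n)) : ℝ≥0∞ :=
  (∫⁻ q in {q : EuclideanSpace ℝ (Fin n) × ℝ | 0 < q.2 ∧ dist x q.1 < a * q.2},
      ENNReal.ofReal |F q.1 q.2| ^ 2 / ENNReal.ofReal (q.2 ^ (n + 1))) ^ (1 / 2 : ℝ)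

/-- The weak `L^p` quasinorm `sup_{λ>0} λ |{g > λ}|^{1/p}` of an `ℝ≥0∞`-valued
function. -/
noncomputable def weakNorm (n : ℕ) (p : ℝ)
    (g : EuclideanSpace ℝ (Fin n) → ℝ≥0∞) : ℝ≥0∞ :=
  ⨆ t : ℝ≥0, (t : ℝ≥0∞) * (volume {x | (t : ℝ≥0∞) < g x}) ^ (1 / p)

noncomputable def coneH (n : ℕ) (F : EuclideanSpace ℝ (Fin n) → ℝ → ℝ)
    (q : EuclideanSpace ℝ (Fin n) × ℝ) : ℝ≥0∞ :=
  ENNReal.ofReal |F q.1 q.2| ^ 2 / ENNReal.ofReal (q.2 ^ (n + 1))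

lemma coneH_measurable {n : ℕ} {F : EuclideanSpace ℝ (Fin n) → ℝ → ℝ}
    (hF : Measurable fun q : EuclideanSpace ℝ (Fin n) × ℝ => F q.1 q.2) :
    Measurable (coneH n F) := by
  apply Measurable.div
  · exact (ENNReal.measurable_ofReal.comp hF.abs).pow_const 2
  · exact ENNReal.measurable_ofReal.comp ((measurable_snd.pow_const (n+1)))

lemma coneSet_measurable {n : ℕ} (a : ℝ) :
    MeasurableSet {p : EuclideanSpace ℝ (Fin n) × (EuclideanSpace ℝ (Fin n) × ℝ) |
      0 < p.2.2 ∧ dist p.1 p.2.1 < a * p.2.2} := by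
  apply MeasurableSet.inter
  · exact measurableSet_lt measurable_const (measurable_snd.snd)
  · exact measurableSet_lt
      (continuous_fst.dist (continuous_snd.fst)).measurable
      (measurable_const.mul measurable_snd.snd)

lemma coneSetx_measurable {n : ℕ} (a : ℝ) (x : EuclideanSpace ℝ (Fin n)) :
    MeasurableSet {q : EuclideanSpace ℝ (Fin n) × ℝ | 0 < q.2 ∧ dist x q.1 < a * q.2} :=
  (measurableSet_lt measurable_const measurable_snd).inter
    (measurableSet_lt ((continuous_const.dist continuous_fst).measurable)
      (measurable_const.mul measurable_snd))

lemma sq_coneSquare (n : ℕ) (F : EuclideanSpace ℝ (Fin n) → ℝ → ℝ) (a : ℝ)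
    (x : EuclideanSpace ℝ (Fin n)) :
    coneSquare n F a x ^ 2 =
      ∫⁻ q in {q : EuclideanSpace ℝ (Fin n) × ℝ | 0 < q.2 ∧ dist x q.1 < a * q.2},
        coneH n F q := by
  rw [coneSquare, ← ENNReal.rpow_natCast _ 2, ← ENNReal.rpow_mul]
  norm_num
  rfl

lemma coneSquare_eq_lintegral_indicator (n : ℕ) (F : EuclideanSpace ℝ (Fin n) → ℝ → ℝ) (a : ℝ)
    (x : EuclideanSpace ℝ (Fin n)) :
    coneSquare n F a x ^ 2 =
      ∫⁻ q, ({p : EuclideanSpace ℝ (Fin n) × (EuclideanSpace ℝ (Fin n) × ℝ) |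
        0 < p.2.2 ∧ dist p.1 p.2.1 < a * p.2.2}).indicator (fun p => coneH n F p.2) (x, q) := by
  rw [sq_coneSquare, ← lintegral_indicator (coneSetx_measurable a x)]
  refine lintegral_congr fun q => ?_
  simp only [Set.indicator_apply, Set.mem_setOf_eq]

lemma coneSquare_measurable {n : ℕ} {F : EuclideanSpace ℝ (Fin n) → ℝ → ℝ}
    (hF : Measurable fun q : EuclideanSpace ℝ (Fin n) × ℝ => F q.1 q.2) (a : ℝ) :
    Measurable (coneSquare n F a) := by
  have h2 : Measurable fun x => coneSquare n F a x ^ 2 := by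
    simp only [coneSquare_eq_lintegral_indicator n F a]
    exact Measurable.lintegral_prod_right'
      (((coneH_measurable hF).comp measurable_snd).indicator (coneSet_measurable a))
  have : coneSquare n F a = fun x => (coneSquare n F a x ^ 2) ^ (1/2 : ℝ) := by
    funext x
    rw [← ENNReal.rpow_natCast _ 2, ← ENNReal.rpow_mul]
    norm_num
  rw [this]
  exact ENNReal.continuous_rpow_const.measurable.comp h2

lemma lintegral_sq_coneSquare {n : ℕ} {F : EuclideanSpace ℝ (Fin n) → ℝ → ℝ}
    (hF : Measurable fun q : EuclideanSpace ℝ (Fin n) × ℝ => F q.1 q.2)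
    {a : ℝ} (ha : 0 < a) (W : Set (EuclideanSpace ℝ (Fin n))) :
    ∫⁻ x in W, coneSquare n F a x ^ 2 =
      ∫⁻ q : EuclideanSpace ℝ (Fin n) × ℝ, coneH n F q * volume (ball q.1 (a * q.2) ∩ W) := by
  have swap := lintegral_lintegral_swap (μ := volume.restrict W)
    (ν := (volume : Measure (EuclideanSpace ℝ (Fin n) × ℝ)))
    (f := fun x q => ({p : EuclideanSpace ℝ (Fin n) × (EuclideanSpace ℝ (Fin n) × ℝ) |
        0 < p.2.2 ∧ dist p.1 p.2.1 < a * p.2.2}).indicator (fun p => coneH n F p.2) (x, q))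
    ((((coneH_measurable hF).comp measurable_snd).indicator (coneSet_measurable a)).aemeasurable)
  calc ∫⁻ x in W, coneSquare n F a x ^ 2
      = ∫⁻ x in W, ∫⁻ q, ({p : EuclideanSpace ℝ (Fin n) × (EuclideanSpace ℝ (Fin n) × ℝ) |
          0 < p.2.2 ∧ dist p.1 p.2.1 < a * p.2.2}).indicator (fun p => coneH n F p.2) (x, q) := by
        simp only [coneSquare_eq_lintegral_indicator]
    _ = ∫⁻ q, ∫⁻ x in W, ({p : EuclideanSpace ℝ (Fin n) × (EuclideanSpace ℝ (Fin n) × ℝ) |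
          0 < p.2.2 ∧ dist p.1 p.2.1 < a * p.2.2}).indicator (fun p => coneH n F p.2) (x, q) :=
        swap
    _ = ∫⁻ q : EuclideanSpace ℝ (Fin n) × ℝ, coneH n F q * volume (ball q.1 (a * q.2) ∩ W) := by
        refine lintegral_congr fun q => ?_
        by_cases hq : 0 < q.2
        · have : ∀ x : EuclideanSpace ℝ (Fin n),
              ({p : EuclideanSpace ℝ (Fin n) × (EuclideanSpace ℝ (Fin n) × ℝ) |
              0 < p.2.2 ∧ dist p.1 p.2.1 < a * p.2.2}).indicator (fun p => coneH n F p.2) (x, q)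
              = (ball q.1 (a * q.2)).indicator (fun _ => coneH n F q) x := by
            intro x
            classical
            rw [Set.indicator_apply, Set.indicator_apply]
            simp [Set.mem_setOf_eq, mem_ball, hq]
          simp only [this]
          rw [lintegral_indicator_const measurableSet_ball,
            Measure.restrict_apply measurableSet_ball]
        · have hball : ball q.1 (a * q.2) = ∅ := by
            apply ball_eq_empty.2
            nlinarith [not_lt.1 hq]
          have : ∀ x : EuclideanSpace ℝ (Fin n),
              ({p : EuclideanSpace ℝ (Fin n) × (EuclideanSpace ℝ (Fin n) × ℝ) |
              0 < p.2.2 ∧ dist p.1 p.2.1 < a * p.2.2}).indicator (fun p => coneH n F p.2) (x, q)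
              = 0 := by
            intro x
            simp [Set.indicator_apply, Set.mem_setOf_eq, hq]
          simp [this, hball]

lemma distribution_le (n : ℕ) {p : ℝ} (hp : 0 < p) (g : EuclideanSpace ℝ (Fin n) → ℝ≥0∞)
    {s : ℝ≥0} (hs : s ≠ 0) :
    volume {x | (s:ℝ≥0∞) < g x} ≤ (weakNorm n p g / s) ^ p := by
  have h1 : (s:ℝ≥0∞) * (volume {x | (s:ℝ≥0∞) < g x}) ^ (1/p) ≤ weakNorm n p g :=
    le_iSup (fun t : ℝ≥0 => (t : ℝ≥0∞) * (volume {x | (t : ℝ≥0∞) < g x}) ^ (1 / p)) s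
  have h2 : (volume {x | (s:ℝ≥0∞) < g x}) ^ (1/p) ≤ weakNorm n p g / s := by
    rw [ENNReal.le_div_iff_mul_le (Or.inl (by exact_mod_cast hs)) (Or.inl ENNReal.coe_ne_top)]
    rwa [mul_comm]
  calc volume {x | (s:ℝ≥0∞) < g x}
      = ((volume {x | (s:ℝ≥0∞) < g x}) ^ (1/p)) ^ p := by
        rw [← ENNReal.rpow_mul, one_div, inv_mul_cancel₀ hp.ne', ENNReal.rpow_one]
    _ ≤ (weakNorm n p g / s) ^ p := ENNReal.rpow_le_rpow h2 hp.le

lemma lintegral_sq_trunc_le (n : ℕ) {p : ℝ} (hp : 0 < p) (hp2 : p < 2)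
    {g : EuclideanSpace ℝ (Fin n) → ℝ≥0∞} (hg : Measurable g) {t : ℝ≥0} (ht : t ≠ 0) :
    ∫⁻ x in {x | g x ≤ (t:ℝ≥0∞)}, g x ^ 2 ≤
      4 * (1 - ((2:ℝ≥0∞)⁻¹) ^ ((2:ℝ) - p))⁻¹ * weakNorm n p g ^ p * (t:ℝ≥0∞) ^ ((2:ℝ) - p) := by
  set ρ : ℝ≥0∞ := ((2:ℝ≥0∞)⁻¹) ^ ((2:ℝ) - p) with hρ
  have hρ1 : ρ ≤ 1 := ENNReal.rpow_le_one (by norm_num) (by linarith)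
  have hρlt : ρ < 1 := ENNReal.rpow_lt_one (by norm_num) (by linarith)
  have hinv_ne_top : (1 - ρ)⁻¹ ≠ ⊤ := by
    simp only [ne_eq, ENNReal.inv_eq_top, tsub_eq_zero_iff_le, not_le]
    exact hρlt
  have hinv_ne_zero : (1 - ρ)⁻¹ ≠ 0 := by
    simp only [ne_eq, ENNReal.inv_eq_zero]
    exact (tsub_le_self.trans_lt (by norm_num : (1:ℝ≥0∞) < ⊤)).ne
  set A := weakNorm n p g with hA
  rcases eq_or_ne A ⊤ with hAtop | hAtop
  · apply le_top.trans_eq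
    rw [hAtop, ENNReal.top_rpow_of_pos hp]
    rw [ENNReal.mul_top, ENNReal.top_mul]
    · exact (ENNReal.rpow_pos (by exact_mod_cast ht.bot_lt) ENNReal.coe_ne_top).ne'
    · exact mul_ne_zero (by norm_num) hinv_ne_zero
  · set c : ℕ → ℝ≥0 := fun k => t * 2⁻¹ ^ k with hc
    have hc0 : ∀ k, c k ≠ 0 := fun k => mul_ne_zero ht (pow_ne_zero _ (by norm_num))
    have hccoe : ∀ k, ((c k : ℝ≥0) : ℝ≥0∞) = (t:ℝ≥0∞) * ((2:ℝ≥0∞)⁻¹) ^ k := by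
      intro k
      rw [hc]
      push_cast [ENNReal.coe_inv (by norm_num : (2:ℝ≥0) ≠ 0)]
      ring
    set E : ℕ → Set (EuclideanSpace ℝ (Fin n)) :=
      fun k => {x | ((c (k+1)):ℝ≥0∞) < g x ∧ g x ≤ ((c k):ℝ≥0∞)} with hE
    have hEm : ∀ k, MeasurableSet (E k) := fun k =>
      (hg measurableSet_Ioi).inter (hg measurableSet_Iic)
    have h2inv : (2:ℝ≥0∞) * 2⁻¹ = 1 := ENNReal.mul_inv_cancel (by norm_num) (by norm_num)
    have hpt : ∀ x ∈ {x | g x ≤ (t:ℝ≥0∞)},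
        g x ^ 2 ≤ ∑' k, (E k).indicator (fun _ => ((c k : ℝ≥0∞))^2) x := by
      intro x hx
      rcases eq_or_ne (g x) 0 with hgx | hgx
      · simp [hgx]
      · have hex : ∃ k, ((c k : ℝ≥0∞)) < g x := by
          obtain ⟨k, hk⟩ := ENNReal.exists_inv_two_pow_lt
            (ENNReal.div_pos hgx ENNReal.coe_ne_top).ne'
          refine ⟨k, ?_⟩
          rw [hccoe]
          calc (t:ℝ≥0∞) * ((2:ℝ≥0∞)⁻¹) ^ k < (t:ℝ≥0∞) * (g x / t) := by
                rw [ENNReal.mul_lt_mul_iff_right (by exact_mod_cast ht) ENNReal.coe_ne_top]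
                exact hk
            _ = g x := by
                rw [mul_comm, ENNReal.div_mul_cancel (by exact_mod_cast ht) ENNReal.coe_ne_top]
        classical
        set m := Nat.find hex with hm
        have hspec : ((c m : ℝ≥0∞)) < g x := Nat.find_spec hex
        have hm0 : m ≠ 0 := by
          intro h0
          rw [h0] at hspec
          simp only [hc, pow_zero, mul_one] at hspec
          exact absurd hx (by simpa using hspec.not_ge)
        obtain ⟨j, hj⟩ := Nat.exists_eq_succ_of_ne_zero hm0
        have hxEj : x ∈ E j := by
          refine ⟨?_, not_lt.1 (Nat.find_min hex (by omega))⟩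
          have : c (j+1) = c m := by rw [hj]
          rw [this]
          exact hspec
        calc g x ^ 2 ≤ ((c j : ℝ≥0∞)) ^ 2 := pow_le_pow_left₀ zero_le hxEj.2 2
          _ = (E j).indicator (fun _ => ((c j : ℝ≥0∞))^2) x := by
              rw [Set.indicator_of_mem hxEj]
          _ ≤ ∑' k, (E k).indicator (fun _ => ((c k : ℝ≥0∞))^2) x := ENNReal.le_tsum j
    calc ∫⁻ x in {x | g x ≤ (t:ℝ≥0∞)}, g x ^ 2
        ≤ ∫⁻ x in {x | g x ≤ (t:ℝ≥0∞)},
            ∑' k, (E k).indicator (fun _ => ((c k : ℝ≥0∞))^2) x :=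
          setLIntegral_mono
            (Measurable.ennreal_tsum fun k => (measurable_const.indicator (hEm k))) hpt
      _ = ∑' k, ∫⁻ x in {x | g x ≤ (t:ℝ≥0∞)}, (E k).indicator (fun _ => ((c k : ℝ≥0∞))^2) x :=
          lintegral_tsum fun k => (measurable_const.indicator (hEm k)).aemeasurable
      _ ≤ ∑' k, 4 * A ^ p * (t:ℝ≥0∞) ^ ((2:ℝ) - p) * ρ ^ k := by
          refine ENNReal.tsum_le_tsum fun k => ?_
          have h1 : ∫⁻ x in {x | g x ≤ (t:ℝ≥0∞)}, (E k).indicator (fun _ => ((c k : ℝ≥0∞))^2) x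
              ≤ ((c k : ℝ≥0∞))^2 * volume {x | ((c (k+1)):ℝ≥0∞) < g x} := by
            rw [lintegral_indicator_const (hEm k)]
            exact mul_le_mul_right ((Measure.restrict_apply_le _ _).trans
              (measure_mono fun x hx => hx.1)) _
          refine h1.trans ?_
          have h2 : volume {x | ((c (k+1)):ℝ≥0∞) < g x} ≤ (A / c (k+1)) ^ p :=
            distribution_le n hp g (hc0 (k+1))
          refine (mul_le_mul_right h2 _).trans ?_
          have hs0 : ((c (k+1) : ℝ≥0) : ℝ≥0∞) ≠ 0 := by exact_mod_cast hc0 (k+1)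
          have hstop : ((c (k+1) : ℝ≥0) : ℝ≥0∞) ≠ ⊤ := ENNReal.coe_ne_top
          have hck : ((c k : ℝ≥0∞)) = 2 * ((c (k+1) : ℝ≥0∞)) := by
            rw [hccoe, hccoe, pow_succ]
            calc (t:ℝ≥0∞) * 2⁻¹ ^ k = (t:ℝ≥0∞) * 2⁻¹ ^ k * 1 := (mul_one _).symm
              _ = 2 * ((t:ℝ≥0∞) * (2⁻¹ ^ k * 2⁻¹)) := by rw [← h2inv]; ring
          rw [hck]
          have hsq : (2 * ((c (k+1) : ℝ≥0∞)))^2 = 4 * ((c (k+1) : ℝ≥0∞))^2 := by ring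
          rw [hsq, ENNReal.div_rpow_of_nonneg _ _ hp.le]
          have hkey : ((c (k+1) : ℝ≥0∞))^2 * (A ^ p / ((c (k+1) : ℝ≥0∞)) ^ p)
              = A ^ p * ((c (k+1) : ℝ≥0∞)) ^ ((2:ℝ) - p) := by
            calc ((c (k+1) : ℝ≥0∞))^2 * (A ^ p / ((c (k+1) : ℝ≥0∞)) ^ p)
                = A ^ p * (((c (k+1) : ℝ≥0∞)) ^ (((2:ℕ)):ℝ) * ((c (k+1) : ℝ≥0∞)) ^ (-p)) := by
                  rw [div_eq_mul_inv, ← ENNReal.rpow_neg, ← ENNReal.rpow_natCast _ 2]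
                  ring
              _ = A ^ p * ((c (k+1) : ℝ≥0∞)) ^ ((((2:ℕ)):ℝ) + (-p)) := by
                  rw [ENNReal.rpow_add _ _ hs0 hstop]
              _ = A ^ p * ((c (k+1) : ℝ≥0∞)) ^ ((2:ℝ) - p) := by
                  push_cast
                  rw [sub_eq_add_neg]
          rw [mul_assoc, hkey]
          have hpow : ((c (k+1) : ℝ≥0∞)) ^ ((2:ℝ) - p)
              = (t:ℝ≥0∞) ^ ((2:ℝ) - p) * ρ ^ (k+1) := by
            rw [hccoe, ENNReal.mul_rpow_of_nonneg _ _ (by linarith : (0:ℝ) ≤ 2 - p)]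
            congr 1
            rw [← ENNReal.rpow_natCast ((2:ℝ≥0∞)⁻¹) (k+1), ← ENNReal.rpow_mul,
              mul_comm ((k+1:ℕ):ℝ) ((2:ℝ)-p), ENNReal.rpow_mul, ENNReal.rpow_natCast]
          rw [hpow]
          calc 4 * (A ^ p * ((t:ℝ≥0∞) ^ ((2:ℝ) - p) * ρ ^ (k+1)))
              = 4 * A ^ p * (t:ℝ≥0∞) ^ ((2:ℝ) - p) * (ρ ^ (k+1)) := by ring
            _ ≤ 4 * A ^ p * (t:ℝ≥0∞) ^ ((2:ℝ) - p) * ρ ^ k :=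
                mul_le_mul_right (pow_le_pow_of_le_one zero_le hρ1 (Nat.le_succ k)) _
      _ = 4 * A ^ p * (t:ℝ≥0∞) ^ ((2:ℝ) - p) * (1 - ρ)⁻¹ := by
          rw [ENNReal.tsum_mul_left, ENNReal.tsum_geometric]
      _ = 4 * (1 - ρ)⁻¹ * A ^ p * (t:ℝ≥0∞) ^ ((2:ℝ) - p) := by ring

lemma euclid_nontrivial {n : ℕ} (hn : n ≠ 0) : Nontrivial (EuclideanSpace ℝ (Fin n)) :=
  ⟨0, EuclideanSpace.single ⟨0, Nat.pos_of_ne_zero hn⟩ 1, by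
    intro h
    have := congrArg (fun v : EuclideanSpace ℝ (Fin n) => v ⟨0, Nat.pos_of_ne_zero hn⟩) h.symm
    simp at this⟩

lemma vol_ball {n : ℕ} (hn : n ≠ 0) (x : EuclideanSpace ℝ (Fin n)) {r : ℝ} (hr : 0 ≤ r) :
    volume (ball x r) = ENNReal.ofReal (r ^ n) * volume (ball (0:EuclideanSpace ℝ (Fin n)) 1) := by
  haveI := euclid_nontrivial hn
  rw [Measure.addHaar_ball _ _ hr, finrank_euclideanSpace_fin]

def goodFam (n : ℕ) (Ω : Set (EuclideanSpace ℝ (Fin n))) (τ : ℝ≥0∞) :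
    Set (EuclideanSpace ℝ (Fin n) × ℝ) :=
  {b | 0 < b.2 ∧ τ * volume (ball b.1 b.2) < volume (Ω ∩ ball b.1 b.2)}

def maxSet (n : ℕ) (Ω : Set (EuclideanSpace ℝ (Fin n))) (τ : ℝ≥0∞) :
    Set (EuclideanSpace ℝ (Fin n)) :=
  ⋃ b ∈ goodFam n Ω τ, ball b.1 b.2

lemma maxSet_open (n : ℕ) (Ω : Set (EuclideanSpace ℝ (Fin n))) (τ : ℝ≥0∞) :
    IsOpen (maxSet n Ω τ) :=
  isOpen_biUnion fun _ _ => isOpen_ball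

lemma geom_pointwise {n : ℕ} (hn : n ≠ 0) (Ω : Set (EuclideanSpace ℝ (Fin n)))
    {α : ℝ} (hα : 1 ≤ α) (y : EuclideanSpace ℝ (Fin n)) (t : ℝ) :
    volume (ball y (α * t) ∩ (maxSet n Ω ((ENNReal.ofReal (2*(α+1)^n))⁻¹))ᶜ)
      ≤ ENNReal.ofReal (2 * α^n) * volume (ball y t ∩ Ωᶜ) := by
  have hα1 : (0:ℝ) < α + 1 := by linarith
  have hα0 : (0:ℝ) < α := by linarith
  set v := volume (ball (0:EuclideanSpace ℝ (Fin n)) 1) with hv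
  set τ : ℝ≥0∞ := (ENNReal.ofReal (2*(α+1)^n))⁻¹ with hτ
  by_cases ht : 0 < t
  swap
  · have : ball y (α * t) = ∅ := ball_eq_empty.2 (by nlinarith [not_lt.1 ht])
    simp [this]
  by_cases hne : (ball y (α*t) ∩ (maxSet n Ω τ)ᶜ).Nonempty
  swap
  · rw [Set.not_nonempty_iff_eq_empty.1 hne]
    simp
  obtain ⟨x₀, hx₀⟩ := hne
  have hkey : volume (Ω ∩ ball y ((α+1)*t)) ≤ τ * volume (ball y ((α+1)*t)) := by
    have hnot : (y, (α+1)*t) ∉ goodFam n Ω τ := by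
      intro hmem
      exact hx₀.2 (Set.mem_biUnion hmem (by
        simp only [mem_ball]
        have := mem_ball.1 hx₀.1
        nlinarith))
    rw [goodFam, Set.mem_setOf_eq, not_and] at hnot
    exact not_lt.1 (hnot (show (0:ℝ) < (α+1)*t by nlinarith))
  have hτball : τ * volume (ball y ((α+1)*t)) = ENNReal.ofReal (t^n/2) * v := by
    rw [vol_ball hn _ (by nlinarith : (0:ℝ) ≤ (α+1)*t), ← mul_assoc]
    congr 1
    rw [hτ, mul_comm, ← div_eq_mul_inv,
      ← ENNReal.ofReal_div_of_pos (mul_pos two_pos (pow_pos hα1 n))]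
    congr 1
    rw [mul_pow]
    have hne' : (α+1)^n ≠ 0 := (pow_pos hα1 n).ne'
    field_simp
  have hΩsmall : volume (Ω ∩ ball y t) ≤ ENNReal.ofReal (t^n/2) * v := by
    refine le_trans (measure_mono ?_) (hkey.trans_eq hτball)
    exact Set.inter_subset_inter_right Ω (ball_subset_ball (by nlinarith))
  have hlower : ENNReal.ofReal (t^n/2) * v ≤ volume (ball y t ∩ Ωᶜ) := by
    have hdiff : ball y t ∩ Ωᶜ = ball y t \ (Ω ∩ ball y t) := by
      ext z
      simp only [Set.mem_inter_iff, Set.mem_compl_iff, Set.mem_diff]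
      tauto
    rw [hdiff]
    refine le_trans ?_ le_measure_diff
    rw [vol_ball hn _ ht.le]
    have h1 : ENNReal.ofReal (t^n/2) * v
        = ENNReal.ofReal (t^n) * v - ENNReal.ofReal (t^n/2) * v := by
      rw [← ENNReal.sub_mul (fun _ _ => measure_ball_lt_top.ne),
        ← ENNReal.ofReal_sub _ (div_nonneg (pow_nonneg ht.le n) (by norm_num))]
      congr 2
      ring
    rw [h1]
    exact tsub_le_tsub le_rfl hΩsmall
  calc volume (ball y (α*t) ∩ (maxSet n Ω τ)ᶜ)
      ≤ volume (ball y (α*t)) := measure_mono Set.inter_subset_left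
    _ = ENNReal.ofReal ((α*t)^n) * v := vol_ball hn _ (by nlinarith)
    _ = ENNReal.ofReal (2*α^n) * (ENNReal.ofReal (t^n/2) * v) := by
        rw [← mul_assoc,
          ← ENNReal.ofReal_mul (mul_nonneg two_pos.le (pow_nonneg hα0.le n))]
        congr 2
        rw [mul_pow]
        ring
    _ ≤ ENNReal.ofReal (2*α^n) * volume (ball y t ∩ Ωᶜ) := mul_le_mul_right hlower _

lemma maxSet_vol {n : ℕ} (hn : n ≠ 0) {Ω : Set (EuclideanSpace ℝ (Fin n))}
    (hΩ : MeasurableSet Ω) {τ : ℝ≥0∞} (hτ0 : τ ≠ 0) (hτtop : τ ≠ ⊤) :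
    volume (maxSet n Ω τ) ≤ ENNReal.ofReal (5^n) * τ⁻¹ * volume Ω := by
  classical
  set v := volume (ball (0:EuclideanSpace ℝ (Fin n)) 1) with hv
  have hvpos : v ≠ 0 := (measure_ball_pos volume 0 one_pos).ne'
  have hvtop : v ≠ ⊤ := measure_ball_lt_top.ne
  rcases eq_or_ne (volume Ω) ⊤ with hΩtop | hΩtop
  · rw [hΩtop, ENNReal.mul_top]
    · exact le_top
    · exact mul_ne_zero (by positivity) (ENNReal.inv_ne_zero.2 hτtop)
  set K : ℝ≥0∞ := volume Ω / (τ * v) with hK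
  have hKtop : K ≠ ⊤ := (ENNReal.div_lt_top hΩtop (mul_ne_zero hτ0 hvpos)).ne
  set R : ℝ := max 1 K.toReal with hR
  have hr_bound : ∀ b ∈ goodFam n Ω τ, b.2 ≤ R := by
    rintro b ⟨hb1, hb2⟩
    have h1 : τ * volume (ball b.1 b.2) < volume Ω :=
      hb2.trans_le (measure_mono Set.inter_subset_left)
    rw [vol_ball hn _ hb1.le] at h1
    have h2 : ENNReal.ofReal (b.2^n) * (τ * v) < volume Ω := by
      calc ENNReal.ofReal (b.2^n) * (τ * v) = τ * (ENNReal.ofReal (b.2^n) * v) := by ring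
        _ < volume Ω := h1
    have h3 : ENNReal.ofReal (b.2^n) < K :=
      (ENNReal.lt_div_iff_mul_lt (Or.inl (mul_ne_zero hτ0 hvpos))
        (Or.inl (ENNReal.mul_ne_top hτtop hvtop))).2 h2
    have h4 : b.2^n ≤ K.toReal := by
      have := ENNReal.toReal_mono hKtop h3.le
      rwa [ENNReal.toReal_ofReal (pow_nonneg hb1.le n)] at this
    rcases le_or_gt b.2 1 with hb | hb
    · exact hb.trans (le_max_left _ _)
    · refine le_trans ?_ (le_max_right 1 K.toReal)
      exact (le_self_pow₀ hb.le hn).trans h4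
  obtain ⟨u, hut, hdisj, hcover⟩ :=
    Vitali.exists_disjoint_subfamily_covering_enlargement_closedBall
      (goodFam n Ω τ) Prod.fst Prod.snd R hr_bound 4 (by norm_num)
  have hupos : ∀ b ∈ u, 0 < b.2 := fun b hb => (hut hb).1
  have hucount : u.Countable := by
    have hpos : ∀ b : u, 0 < volume (closedBall b.1.1 b.1.2) := by
      intro b
      exact (measure_ball_pos volume _ (hupos b b.2)).trans_le
        (measure_mono ball_subset_closedBall)
    have hdisj' : Pairwise (Function.onFun Disjoint fun b : u => closedBall b.1.1 b.1.2) := by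
      intro i j hij
      exact hdisj i.2 j.2 (fun h => hij (Subtype.ext h))
    have hcnt := MeasureTheory.Measure.countable_meas_pos_of_disjoint_iUnion
      (μ := volume) (fun b : u => measurableSet_closedBall) hdisj'
    have huniv : (Set.univ : Set u).Countable := by
      refine hcnt.mono ?_
      intro b _
      exact hpos b
    rw [Set.countable_univ_iff] at huniv
    exact Set.countable_coe_iff.1 huniv
  have hsub : maxSet n Ω τ ⊆ ⋃ b ∈ u, ball b.1 (5 * b.2) := by
    intro z hz
    obtain ⟨b, hb, hzb⟩ := Set.mem_iUnion₂.1 hz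
    obtain ⟨c, hc, hsubc⟩ := hcover b hb
    refine Set.mem_iUnion₂.2 ⟨c, hc, ?_⟩
    have hzc : z ∈ closedBall c.1 (4 * c.2) := hsubc (ball_subset_closedBall hzb)
    have hc2 : 0 < c.2 := hupos c hc
    exact lt_of_le_of_lt (mem_closedBall.1 hzc) (by nlinarith)
  calc volume (maxSet n Ω τ)
      ≤ volume (⋃ b ∈ u, ball b.1 (5 * b.2)) := measure_mono hsub
    _ ≤ ∑' b : u, volume (ball b.1.1 (5 * b.1.2)) :=
        measure_biUnion_le _ hucount _
    _ ≤ ∑' b : u, ENNReal.ofReal (5^n) * τ⁻¹ * volume (Ω ∩ ball b.1.1 b.1.2) := by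
        refine ENNReal.tsum_le_tsum fun b => ?_
        have hb2 : 0 < b.1.2 := hupos b b.2
        have hgood := hut b.2
        have hvol5 : volume (ball b.1.1 (5 * b.1.2))
            = ENNReal.ofReal (5^n) * volume (ball b.1.1 b.1.2) := by
          rw [vol_ball hn _ (by nlinarith), vol_ball hn _ hb2.le, ← mul_assoc,
            ← ENNReal.ofReal_mul (by positivity)]
          congr 2
          rw [mul_pow]
        rw [hvol5, mul_assoc]
        refine mul_le_mul_right ?_ _
        have hlt := hgood.2
        rw [← ENNReal.div_eq_inv_mul,
          ENNReal.le_div_iff_mul_le (Or.inl hτ0) (Or.inl hτtop), mul_comm]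
        exact hlt.le
    _ = ENNReal.ofReal (5^n) * τ⁻¹ * ∑' b : u, volume (Ω ∩ ball b.1.1 b.1.2) := by
        rw [ENNReal.tsum_mul_left]
    _ ≤ ENNReal.ofReal (5^n) * τ⁻¹ * volume Ω := by
        refine mul_le_mul_right ?_ _
        have hbi := measure_biUnion (μ := volume) hucount
          (hdisj.mono fun b => Set.inter_subset_right.trans ball_subset_closedBall)
          (fun b _ => hΩ.inter measurableSet_ball)
        rw [← hbi]
        exact measure_mono (Set.iUnion₂_subset fun b _ => Set.inter_subset_left)
/-- Change of aperture in weak `L^p`, `0 < p < 2`: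
`‖S_α F‖_{L^{p,∞}} ≤ c_p α^{n/p} ‖S_1 F‖_{L^{p,∞}}`, assuming the weak (1,1) bound
for the Hardy–Littlewood maximal operator `M` and the good-λ change-of-aperture
inequality `∫_{ℝⁿ∖U_λ} S_α(F)² ≤ 2αⁿ ∫_{ℝⁿ∖Ω_λ} S_1(F)²`. -/
theorem weak_aperture_bound (n : ℕ) (p : ℝ) (hp : 0 < p ∧ p < 2) (cM : ℝ≥0∞) :
    ∃ C : ℝ≥0∞, C ≠ ⊤ ∧
      ∀ (F : EuclideanSpace ℝ (Fin n) → ℝ → ℝ)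
        (_ : Measurable fun q : EuclideanSpace ℝ (Fin n) × ℝ => F q.1 q.2)
        (α : ℝ) (_ : 1 ≤ α)
        (M : Set (EuclideanSpace ℝ (Fin n)) → EuclideanSpace ℝ (Fin n) → ℝ≥0∞)
        (_ : ∀ (E : Set (EuclideanSpace ℝ (Fin n))) (t : ℝ≥0∞), 0 < t →
              volume {x | t < M E x} ≤ cM * volume E / t)
        (_ : ∀ lam : ℝ≥0, 0 < lam →
              ∫⁻ x in {x | ¬ (ENNReal.ofReal (2 * α) ^ n)⁻¹ <
                  M {y | (lam : ℝ≥0∞) < coneSquare n F 1 y} x},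
                (coneSquare n F α x) ^ 2 ≤
              ENNReal.ofReal (2 * α ^ n) *
                ∫⁻ x in {x | coneSquare n F 1 x ≤ (lam : ℝ≥0∞)},
                  (coneSquare n F 1 x) ^ 2),
        weakNorm n p (coneSquare n F α) ≤
          C * ENNReal.ofReal α ^ (n / p) * weakNorm n p (coneSquare n F 1) := by
  obtain ⟨hp, hp2⟩ := hp
  by_cases hn : n = 0
  · subst hn
    refine ⟨1, ENNReal.one_ne_top, ?_⟩
    intro F hF α hα M hM1 hM2
    have hcs : coneSquare 0 F α = coneSquare 0 F 1 := by
      funext x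
      unfold coneSquare
      have hset : {q : EuclideanSpace ℝ (Fin 0) × ℝ | 0 < q.2 ∧ dist x q.1 < α * q.2}
          = {q : EuclideanSpace ℝ (Fin 0) × ℝ | 0 < q.2 ∧ dist x q.1 < 1 * q.2} := by
        ext q
        have hd : dist x q.1 = 0 := by
          rw [Subsingleton.elim x q.1, dist_self]
        simp only [Set.mem_setOf_eq, hd]
        constructor
        · rintro ⟨h1, _⟩
          exact ⟨h1, by nlinarith⟩
        · rintro ⟨h1, _⟩
          exact ⟨h1, by nlinarith⟩
      rw [hset]
    rw [hcs]
    simp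
  -- main case n ≠ 0
  set ρ : ℝ≥0∞ := ((2:ℝ≥0∞)⁻¹) ^ ((2:ℝ) - p) with hρ
  set CP : ℝ≥0∞ := 4 * (1 - ρ)⁻¹ with hCP
  have hρlt : ρ < 1 := ENNReal.rpow_lt_one (by norm_num) (by linarith)
  have hCPtop : CP ≠ ⊤ := by
    rw [hCP]
    refine ENNReal.mul_ne_top (by norm_num) ?_
    simp only [ne_eq, ENNReal.inv_eq_top, tsub_eq_zero_iff_le, not_le]
    exact hρlt
  set D : ℝ≥0∞ := ENNReal.ofReal (2*10^n) + 2 * CP with hD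
  have hDtop : D ≠ ⊤ := by
    rw [hD]
    exact ENNReal.add_ne_top.2 ⟨ENNReal.ofReal_ne_top, ENNReal.mul_ne_top (by norm_num) hCPtop⟩
  have hD0 : D ≠ 0 := by
    rw [hD]
    intro h
    rw [add_eq_zero] at h
    have h1 := h.1
    rw [ENNReal.ofReal_eq_zero] at h1
    have h2 : (0:ℝ) < 2*10^n := by positivity
    linarith
  refine ⟨D ^ (1/p : ℝ), ENNReal.rpow_ne_top_of_nonneg (by positivity) hDtop, ?_⟩
  intro F hF α hα M hM1 hM2
  set A := weakNorm n p (coneSquare n F 1) with hA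
  have hα0 : (0:ℝ) < α := by linarith
  have hαpow0 : ENNReal.ofReal α ^ ((n:ℝ) / p) ≠ 0 :=
    (ENNReal.rpow_pos (ENNReal.ofReal_pos.2 hα0) ENNReal.ofReal_ne_top).ne'
  rcases eq_or_ne A ⊤ with hAtop | hAtop
  · rw [hAtop, ENNReal.mul_top (mul_ne_zero (ENNReal.rpow_pos hD0.bot_lt hDtop).ne' hαpow0)]
    exact le_top
  rw [weakNorm]
  refine iSup_le fun t => ?_
  rcases eq_or_ne t 0 with ht0 | ht0
  · simp [ht0]
  set T : ℝ≥0∞ := (t:ℝ≥0∞) with hT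
  have hT0 : T ≠ 0 := ENNReal.coe_ne_zero.2 ht0
  have hTtop : T ≠ ⊤ := ENNReal.coe_ne_top
  set g1 := coneSquare n F 1 with hg1
  set gα := coneSquare n F α with hgα
  have hg1m : Measurable g1 := coneSquare_measurable hF 1
  have hgαm : Measurable gα := coneSquare_measurable hF α
  set Ω : Set (EuclideanSpace ℝ (Fin n)) := {x | T < g1 x} with hΩ
  have hΩm : MeasurableSet Ω := hg1m measurableSet_Ioi
  set τ : ℝ≥0∞ := (ENNReal.ofReal (2*(α+1)^n))⁻¹ with hτ
  have hτ0 : τ ≠ 0 := ENNReal.inv_ne_zero.2 ENNReal.ofReal_ne_top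
  have hτtop : τ ≠ ⊤ := by
    simp only [hτ, ne_eq, ENNReal.inv_eq_top, ENNReal.ofReal_eq_zero, not_le]
    nlinarith [pow_pos (show (0:ℝ) < α + 1 by linarith) n]
  set U := maxSet n Ω τ with hU
  have hUm : MeasurableSet U := (maxSet_open n Ω τ).measurableSet
  have hΩvol : volume Ω ≤ (A / T)^p := distribution_le n hp g1 ht0
  have hAT : (A / T)^p = A^p * T^((-p):ℝ) := by
    rw [ENNReal.div_rpow_of_nonneg _ _ hp.le, ENNReal.rpow_neg, div_eq_mul_inv]
  have hU1 : volume U ≤ ENNReal.ofReal (2*10^n) * (ENNReal.ofReal (α^n) * volume Ω) := by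
    refine (maxSet_vol hn hΩm hτ0 hτtop).trans ?_
    rw [hτ, inv_inv]
    calc ENNReal.ofReal (5^n) * ENNReal.ofReal (2*(α+1)^n) * volume Ω
        = ENNReal.ofReal (5^n * (2*(α+1)^n)) * volume Ω := by
          rw [← ENNReal.ofReal_mul (by positivity : (0:ℝ) ≤ 5^n)]
      _ ≤ ENNReal.ofReal (2*10^n * α^n) * volume Ω := by
          refine mul_le_mul_left (ENNReal.ofReal_le_ofReal ?_) _
          have h1 : (α+1)^n ≤ 2^n * α^n := by
            rw [← mul_pow]
            exact pow_le_pow_left₀ (by linarith) (by linarith) n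
          have h10 : (10:ℝ)^n = 5^n * 2^n := by rw [← mul_pow]; norm_num
          have h2 := mul_le_mul_of_nonneg_left h1 (by positivity : (0:ℝ) ≤ 2*5^n)
          calc (5:ℝ)^n * (2*(α+1)^n) = 2*5^n*(α+1)^n := by ring
            _ ≤ 2*5^n*(2^n*α^n) := h2
            _ = 2*10^n*α^n := by rw [h10]; ring
      _ = ENNReal.ofReal (2*10^n) * (ENNReal.ofReal (α^n) * volume Ω) := by
          rw [ENNReal.ofReal_mul (by positivity : (0:ℝ) ≤ 2*10^n), mul_assoc]
  have hΩc : Ωᶜ = {x | g1 x ≤ T} := by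
    ext x
    simp [hΩ, not_lt]
  have hIα : ∫⁻ x in Uᶜ, gα x ^ 2 ≤ ENNReal.ofReal (2*α^n) * (CP * A^p * T^((2:ℝ)-p)) := by
    calc ∫⁻ x in Uᶜ, gα x ^ 2
        = ∫⁻ q : EuclideanSpace ℝ (Fin n) × ℝ,
            coneH n F q * volume (ball q.1 (α*q.2) ∩ Uᶜ) := lintegral_sq_coneSquare hF hα0 _
      _ ≤ ∫⁻ q : EuclideanSpace ℝ (Fin n) × ℝ,
            ENNReal.ofReal (2*α^n) * (coneH n F q * volume (ball q.1 (1*q.2) ∩ Ωᶜ)) := by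
          refine lintegral_mono fun q => ?_
          rw [one_mul]
          calc coneH n F q * volume (ball q.1 (α*q.2) ∩ Uᶜ)
              ≤ coneH n F q * (ENNReal.ofReal (2*α^n) * volume (ball q.1 q.2 ∩ Ωᶜ)) :=
                mul_le_mul_right (geom_pointwise hn Ω hα q.1 q.2) _
            _ = ENNReal.ofReal (2*α^n) * (coneH n F q * volume (ball q.1 q.2 ∩ Ωᶜ)) := by
                ring
      _ = ENNReal.ofReal (2*α^n) * ∫⁻ x in Ωᶜ, g1 x ^ 2 := by
          rw [lintegral_const_mul' _ _ ENNReal.ofReal_ne_top,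
            ← lintegral_sq_coneSquare hF one_pos Ωᶜ]
      _ ≤ ENNReal.ofReal (2*α^n) * (CP * A^p * T^((2:ℝ)-p)) := by
          refine mul_le_mul_right ?_ _
          rw [hΩc, hCP]
          exact lintegral_sq_trunc_le n hp hp2 hg1m ht0
  have hcheb : T^2 * volume ({x | T < gα x} ∩ Uᶜ) ≤ ∫⁻ x in Uᶜ, gα x ^ 2 := by
    have h1 := mul_meas_ge_le_lintegral₀ (μ := volume.restrict Uᶜ)
      ((hgαm.pow_const 2).aemeasurable) (T^2)
    refine le_trans ?_ h1
    refine mul_le_mul_right ?_ _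
    have hms : MeasurableSet {x : EuclideanSpace ℝ (Fin n) | T^2 ≤ gα x ^ 2} :=
      (hgαm.pow_const 2) measurableSet_Ici
    rw [Measure.restrict_apply hms]
    refine measure_mono (Set.inter_subset_inter_left _ fun x hx => ?_)
    exact pow_le_pow_left₀ zero_le (le_of_lt (show T < gα x from hx)) 2
  have h2 : volume ({x | T < gα x} ∩ Uᶜ)
      ≤ (ENNReal.ofReal (2*α^n) * (CP * A^p * T^((2:ℝ)-p))) * ((T^2)⁻¹) := by
    have hTT : (T^2) ≠ 0 := pow_ne_zero _ hT0
    have hTTtop : (T^2) ≠ ⊤ := ENNReal.pow_ne_top hTtop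
    calc volume ({x | T < gα x} ∩ Uᶜ)
        = volume ({x | T < gα x} ∩ Uᶜ) * (T^2) * (T^2)⁻¹ := by
          rw [mul_assoc, ENNReal.mul_inv_cancel hTT hTTtop, mul_one]
      _ ≤ _ := mul_le_mul_left (by rw [mul_comm]; exact hcheb.trans hIα) _
  have hmain : volume {x | T < gα x} ≤ D * (ENNReal.ofReal (α^n) * (A^p * T^((-p):ℝ))) := by
    calc volume {x | T < gα x}
        ≤ volume U + volume ({x | T < gα x} ∩ Uᶜ) := by
          refine le_trans (measure_mono fun x hx => ?_) (measure_union_le _ _)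
          by_cases hxU : x ∈ U
          · exact Set.mem_union_left _ hxU
          · exact Set.mem_union_right _ ⟨hx, hxU⟩
      _ ≤ ENNReal.ofReal (2*10^n) * (ENNReal.ofReal (α^n) * (A^p * T^((-p):ℝ)))
          + 2 * CP * (ENNReal.ofReal (α^n) * (A^p * T^((-p):ℝ))) := by
          refine add_le_add ?_ ?_
          · refine hU1.trans ?_
            rw [← hAT]
            exact mul_le_mul_right (mul_le_mul_right hΩvol _) _
          · refine h2.trans (le_of_eq ?_)
            have hTT2 : T^((2:ℝ)-p) * ((T^2)⁻¹) = T^((-p):ℝ) := by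
              rw [← ENNReal.rpow_natCast T 2, ← ENNReal.rpow_neg,
                ← ENNReal.rpow_add _ _ hT0 hTtop]
              congr 1
              push_cast
              ring
            rw [← hTT2, ENNReal.ofReal_mul (by norm_num : (0:ℝ) ≤ 2), ENNReal.ofReal_ofNat]
            ring
      _ = D * (ENNReal.ofReal (α^n) * (A^p * T^((-p):ℝ))) := by
          rw [hD]
          ring
  have e1 : ((ENNReal.ofReal α ^ n : ℝ≥0∞)) ^ (1/p:ℝ) = ENNReal.ofReal α ^ ((n:ℝ)/p) := by
    rw [← ENNReal.rpow_natCast _ n, ← ENNReal.rpow_mul, mul_one_div]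
  have e2 : (A^p)^(1/p:ℝ) = A := by
    rw [← ENNReal.rpow_mul, mul_one_div, div_self hp.ne', ENNReal.rpow_one]
  have e3 : (T^((-p):ℝ))^(1/p:ℝ) = T⁻¹ := by
    rw [← ENNReal.rpow_mul, show (-p)*(1/p) = (-1:ℝ) by field_simp, ENNReal.rpow_neg_one]
  calc T * volume {x | T < gα x} ^ (1/p)
      ≤ T * (D * (ENNReal.ofReal (α^n) * (A^p * T^((-p):ℝ)))) ^ (1/p) :=
        mul_le_mul_right (ENNReal.rpow_le_rpow hmain (by positivity)) _
    _ = D ^ (1/p:ℝ) * ENNReal.ofReal α ^ ((n:ℝ)/p) * A := by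
        rw [ENNReal.mul_rpow_of_nonneg _ _ (by positivity : (0:ℝ) ≤ 1/p),
          ENNReal.mul_rpow_of_nonneg _ _ (by positivity : (0:ℝ) ≤ 1/p),
          ENNReal.mul_rpow_of_nonneg _ _ (by positivity : (0:ℝ) ≤ 1/p),
          ENNReal.ofReal_pow hα0.le, e1, e2, e3]
        calc T * (D^(1/p:ℝ) * (ENNReal.ofReal α ^ ((n:ℝ)/p) * (A * T⁻¹)))
            = D^(1/p:ℝ) * ENNReal.ofReal α ^ ((n:ℝ)/p) * A * (T * T⁻¹) := by ring
          _ = D^(1/p:ℝ) * ENNReal.ofReal α ^ ((n:ℝ)/p) * A := by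
              rw [ENNReal.mul_inv_cancel hT0 hTtop, mul_one]
    _ ≤ D ^ (1/p:ℝ) * ENNReal.ofReal α ^ ((n:ℝ)/p) * A := le_rfl
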